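/- Every stable model of a logic program P with negation as failure in the head is also a set-stable model of P. -/

import Mathlib

/- Literals: atoms and naf-negated atoms -/
inductive Lit (α : Type) where
  | pos : α → Lit α
  | neg : α → Lit α
deriving DecidableEq

/- A rule with a head sentence and a finite body of sentences -/
structure ABARule (σ : Type) where
  head : σ
  body : Finset σ

/- A logic program with naf in the head: rules over literals -/
abbrev LP (α : Type) := Set (ABARule (Lit α))

/-- Herbrand base: atoms occurring in P -/
def HB {α : Type} (P : LP α) : Set α :=
  {a | ∃ r ∈ P, r.head = Lit.pos a ∨ r.head = Lit.neg a ∨ Lit.pos a ∈ r.body ∨ Lit.neg a ∈ r.body}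

/-- Δ(I) = {not p | p ∈ HB_P, p ∉ I} -/
def DeltaSet {α : Type} (P : LP α) (I : Set α) : Set (Lit α) :=
  {l | ∃ p, p ∈ HB P ∧ p ∉ I ∧ l = Lit.neg p}

/- Positive program rules: possibly empty head (constraints) -/
structure PosRule (α : Type) where
  head : Option α
  body : Set α

def bodyPos {α : Type} (r : ABARule (Lit α)) : Set α := {a | Lit.pos a ∈ r.body}
def bodyNeg {α : Type} (r : ABARule (Lit α)) : Set α := {a | Lit.neg a ∈ r.body}
def headPos {α : Type} (r : ABARule (Lit α)) : Option α :=
  match r.head with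
  | .pos a => some a
  | .neg _ => none
def headNeg {α : Type} (r : ABARule (Lit α)) : Set α := {a | r.head = Lit.neg a}

/-- The reduct P^I -/
def reduct {α : Type} (P : LP α) (I : Set α) : Set (PosRule α) :=
  {q | ∃ r ∈ P, bodyNeg r ∩ I = ∅ ∧ headNeg r ⊆ I ∧ q = ⟨headPos r, bodyPos r⟩}

/-- Conditions (a) and (b): J is a (supported) Herbrand model of a positive program Q -/
def SatModel {α : Type} (Q : Set (PosRule α)) (J : Set α) : Prop :=
  (∀ p, p ∈ J ↔ ∃ q ∈ Q, q.head = some p ∧ q.body ⊆ J) ∧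
  (∀ q ∈ Q, q.head = none → ¬ q.body ⊆ J)

/-- Stable model: ⊆-minimal set of atoms satisfying (a) and (b) w.r.t. P^I -/
def StableModel {α : Type} (P : LP α) (I : Set α) : Prop :=
  I ⊆ HB P ∧ SatModel (reduct P I) I ∧ ∀ J ⊆ I, SatModel (reduct P I) J → J = I

/-- Derivability in a positive program -/
inductive PosDeriv {α : Type} (Q : Set (PosRule α)) : α → Prop
  | step {q : PosRule α} {a : α} : q ∈ Q → q.head = some a →
      (∀ b ∈ q.body, PosDeriv Q b) → PosDeriv Q a

/-- Tree-derivability of a sentence from (a subset of) the assumption set S using rules R -/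
inductive Deriv {σ : Type} (R : Set (ABARule σ)) (S : Set σ) : σ → Prop
  | assum {s : σ} : s ∈ S → Deriv R S s
  | step {r : ABARule σ} : r ∈ R → (∀ b ∈ r.body, Deriv R S b) → Deriv R S r.head

/- Assumption-based argumentation frameworks -/
structure ABAF (σ : Type) where
  L : Set σ
  R : Set (ABARule σ)
  A : Set σ
  co : σ → σ

def ThSet {σ : Type} (D : ABAF σ) (S : Set σ) : Set σ := {p | Deriv D.R S p}

def ConflictFree {σ : Type} (D : ABAF σ) (S : Set σ) : Prop :=
  ∀ a ∈ S, ¬ Deriv D.R S (D.co a)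

def ABAClosed {σ : Type} (D : ABAF σ) (S : Set σ) : Prop :=
  ∀ a ∈ D.A, Deriv D.R S a → a ∈ S

/-- Stable extensions: closed conflict-free sets attacking every outside assumption -/
def StableExt {σ : Type} (D : ABAF σ) (S : Set σ) : Prop :=
  S ⊆ D.A ∧ ConflictFree D S ∧ ABAClosed D S ∧
    ∀ x ∈ D.A, x ∉ S → Deriv D.R S (D.co x)

/-- Set-stable extensions: attack the closure cl({x}) of every outside assumption -/
def SetStableExt {σ : Type} (D : ABAF σ) (S : Set σ) : Prop :=
  S ⊆ D.A ∧ ConflictFree D S ∧ ABAClosed D S ∧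
    ∀ x ∈ D.A, x ∉ S → ∃ b ∈ D.A, Deriv D.R {x} b ∧ Deriv D.R S (D.co b)

/-- The ABA framework D_P corresponding to an LP P -/
def ABAFofLP {α : Type} (P : LP α) : ABAF (Lit α) :=
  { L := {l | ∃ p ∈ HB P, l = Lit.pos p ∨ l = Lit.neg p}
    R := P
    A := {l | ∃ p ∈ HB P, l = Lit.neg p}
    co := fun l => match l with
      | .pos p => Lit.pos p
      | .neg p => Lit.pos p }

/-- The LP-ABA fragment: no assumption is a contrary, contrary injective, L = A ∪ Ā
    (together with well-formedness of rules and contraries w.r.t. the language) -/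
def IsLPABA {σ : Type} (D : ABAF σ) : Prop :=
  (∀ r ∈ D.R, r.head ∈ D.L ∧ ∀ b ∈ r.body, b ∈ D.L) ∧
  D.A ⊆ D.L ∧
  (∀ a ∈ D.A, D.co a ∉ D.A) ∧
  Set.InjOn D.co D.A ∧
  D.L = D.A ∪ D.co '' D.A

open Classical in
/-- rep(a) = not ā for assumptions, rep(s) = s (as an atom) otherwise -/
noncomputable def repLit {σ : Type} (D : ABAF σ) (s : σ) : Lit σ :=
  if s ∈ D.A then Lit.neg (D.co s) else Lit.pos s

noncomputable def repRule {σ : Type} [DecidableEq σ] (D : ABAF σ) (r : ABARule σ) :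
    ABARule (Lit σ) :=
  ⟨repLit D r.head, r.body.image (repLit D)⟩

/-- The LP P_D associated with an (LP-)ABAF D -/
noncomputable def LPofABAF {σ : Type} [DecidableEq σ] (D : ABAF σ) : LP σ :=
  (repRule D) '' D.R

/-- One-step support operator -/
def suppOp {α : Type} (P : LP α) (S : Set (Lit α)) : Set (Lit α) :=
  S ∪ {l | ∃ r ∈ P, r.head = l ∧ ∀ b ∈ r.body, b ∈ S}

/-- Closure cl(S) = ⋃_{i>0} suppⁱ(S) -/
def clLP {α : Type} (P : LP α) (S : Set (Lit α)) : Set (Lit α) :=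
  ⋃ i : ℕ, (suppOp P)^[i + 1] S

/-- The set-stable reduct P^I_s = P^I ∪ {a ← b | a ≠ b, not b ∈ cl({not a})} -/
def sReduct {α : Type} (P : LP α) (I : Set α) : Set (PosRule α) :=
  reduct P I ∪
    {q | ∃ a b, a ∈ HB P ∧ b ∈ HB P ∧ a ≠ b ∧ Lit.neg b ∈ clLP P {Lit.neg a} ∧
        q = ⟨some a, {b}⟩}

/-- Set-stable models -/
def SetStableModel {α : Type} (P : LP α) (I : Set α) : Prop :=
  I ⊆ HB P ∧ SatModel (sReduct P I) I ∧ ∀ J ⊆ I, SatModel (sReduct P I) J → J = I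

/-- Bipolar LPs: each rule body is a single naf-literal -/
def IsBipolarLP {α : Type} (P : LP α) : Prop :=
  ∀ r ∈ P, ∃ b, r.body = {Lit.neg b}

/-- All (positive and naf) literals over the Herbrand base of P -/
def LitsOf {α : Type} (P : LP α) : Set (Lit α) :=
  {l | ∃ p ∈ HB P, l = Lit.pos p ∨ l = Lit.neg p}

/-- Truth of a literal in an interpretation -/
def trueIn {α : Type} (I : Set α) : Lit α → Prop
  | .pos p => p ∈ I
  | .neg p => p ∉ I

lemma supp_true {α : Type} (P : LP α) (I : Set α) (hsat : SatModel (reduct P I) I)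
    (S : Set (Lit α)) (hS : ∀ l ∈ S, trueIn I l) :
    ∀ l ∈ suppOp P S, trueIn I l := by
  rintro l (hl | ⟨r, hr, hhead, hbody⟩)
  · exact hS l hl
  · have hbp : bodyPos r ⊆ I := fun a ha => hS _ (hbody _ ha)
    have hbn : bodyNeg r ∩ I = ∅ := by
      ext a
      simp only [Set.mem_inter_iff, Set.mem_empty_iff_false, iff_false, not_and]
      intro ha hai
      exact (hS _ (hbody _ ha)) hai
    subst hhead
    cases hh : r.head with
    | pos p =>
      have hhn : headNeg r ⊆ I := by
        intro a ha
        simp only [headNeg, Set.mem_setOf_eq, hh] at ha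
        exact (nomatch ha)
      have hq : (⟨some p, bodyPos r⟩ : PosRule α) ∈ reduct P I := by
        refine ⟨r, hr, hbn, hhn, ?_⟩
        simp [headPos, hh]
      exact (hsat.1 p).2 ⟨_, hq, rfl, hbp⟩
    | neg p =>
      intro hpI
      have hhn : headNeg r ⊆ I := by
        intro a ha
        simp only [headNeg, Set.mem_setOf_eq, hh] at ha
        cases ha
        exact hpI
      have hq : (⟨none, bodyPos r⟩ : PosRule α) ∈ reduct P I := by
        refine ⟨r, hr, hbn, hhn, ?_⟩
        simp [headPos, hh]
      exact hsat.2 _ hq rfl hbp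

lemma cl_true {α : Type} (P : LP α) (I : Set α) (hsat : SatModel (reduct P I) I)
    (S : Set (Lit α)) (hS : ∀ l ∈ S, trueIn I l) :
    ∀ l ∈ clLP P S, trueIn I l := by
  have iter : ∀ i, ∀ l ∈ (suppOp P)^[i] S, trueIn I l := by
    intro i
    induction i with
    | zero => exact hS
    | succ n ih =>
      rw [Function.iterate_succ_apply']
      exact supp_true P I hsat _ ih
  intro l hl
  obtain ⟨i, hi⟩ := Set.mem_iUnion.mp hl
  exact iter (i + 1) l hi

/-- every stable model of an LP with naf in the head is set-stable. -/
theorem stmt11 {α : Type} (P : LP α) (I : Set α) (h : StableModel P I) :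
    SetStableModel P I := by
  obtain ⟨hHB, hsat, hmin⟩ := h
  have key : ∀ a b : α, a ∉ I → Lit.neg b ∈ clLP P {Lit.neg a} → b ∉ I := by
    intro a b haI hcl
    have hS : ∀ l ∈ ({Lit.neg a} : Set (Lit α)), trueIn I l := by
      rintro l rfl
      exact haI
    exact cl_true P I hsat _ hS _ hcl
  -- condition (a)/(b) for I w.r.t. the set-stable reduct
  have hsat' : SatModel (sReduct P I) I := by
    constructor
    · intro p
      constructor
      · intro hp
        obtain ⟨q, hq, hh, hb⟩ := (hsat.1 p).1 hp
        exact ⟨q, Or.inl hq, hh, hb⟩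
      · rintro ⟨q, hq | hq, hh, hb⟩
        · exact (hsat.1 p).2 ⟨q, hq, hh, hb⟩
        · obtain ⟨a, b, -, -, -, hcl, rfl⟩ := hq
          simp only at hh
          cases hh
          by_contra hpI
          exact key p b hpI hcl (hb rfl)
    · rintro q (hq | ⟨a, b, -, -, -, -, rfl⟩) hnone
      · exact hsat.2 q hq hnone
      · simp at hnone
  refine ⟨hHB, hsat', ?_⟩
  intro J hJI hJsat
  set Q' : Set (PosRule α) := {q | q ∈ reduct P I ∧ q.body ⊆ J} with hQ'
  set K : Set α := {p | p ∈ J ∧ PosDeriv Q' p} with hK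
  have hKJ : K ⊆ J := fun p hp => hp.1
  have hKsat : SatModel (reduct P I) K := by
    constructor
    · intro p
      constructor
      · rintro ⟨hpJ, hd⟩
        cases hd with
        | step hq hh hbody =>
          rename_i q
          refine ⟨q, hq.1, hh, ?_⟩
          intro b hb
          exact ⟨hq.2 hb, hbody b hb⟩
      · rintro ⟨q, hq, hh, hb⟩
        have hbJ : q.body ⊆ J := fun b hbq => (hb hbq).1
        have hpJ : p ∈ J := (hJsat.1 p).2 ⟨q, Or.inl hq, hh, hbJ⟩
        exact ⟨hpJ, PosDeriv.step ⟨hq, hbJ⟩ hh (fun b hbq => (hb hbq).2)⟩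
    · intro q hq hnone hbK
      exact hJsat.2 q (Or.inl hq) hnone (fun b hbq => (hbK hbq).1)
  have hKI : K = I := hmin K (hKJ.trans hJI) hKsat
  exact hJI.antisymm (hKI ▸ hKJ)
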